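/- For real p > 6, the distance function h(p) defined by cosh²(h(p)) = (h₂₂h₃₃ - h₂₃²)/(h₂₂h₃₃), where h_{ij} are the entries of the inverse of the Coxeter–Schläfli matrix C(p), is strictly decreasing in p, and h(p) → 0 as p → ∞. -/

import Mathlib

/-- The inverse hyperbolic cosine, `arcosh x = log (x + √(x² - 1))`. -/
noncomputable def arcosh (x : ℝ) : ℝ := Real.log (x + Real.sqrt (x ^ 2 - 1))

/-- The Coxeter–Schläfli matrix of the simply truncated orthoscheme with essential
dihedral angles `π/p, π/3, π/3`. -/
noncomputable def coxeterSchlafli (p : ℝ) : Matrix (Fin 4) (Fin 4) ℝ :=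
  !![1, -Real.cos (Real.pi / p), 0, 0;
     -Real.cos (Real.pi / p), 1, -(1/2 : ℝ), 0;
     0, -(1/2 : ℝ), 1, -(1/2 : ℝ);
     0, 0, -(1/2 : ℝ), 1]

/-- The height `h(p) ≥ 0` defined by `cosh² h(p) = (h₂₂h₃₃ - h₂₃²)/(h₂₂h₃₃)`,
where `hᵢⱼ` are the entries of the inverse of the Coxeter–Schläfli matrix. -/
noncomputable def hyperballHeight (p : ℝ) : ℝ :=
  arcosh (Real.sqrt
    (((coxeterSchlafli p)⁻¹ 2 2 * (coxeterSchlafli p)⁻¹ 3 3 -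
        ((coxeterSchlafli p)⁻¹ 2 3) ^ 2) /
      ((coxeterSchlafli p)⁻¹ 2 2 * (coxeterSchlafli p)⁻¹ 3 3)))

/-- Explicit inverse of the Coxeter–Schläfli matrix, in terms of `c = cos (π/p)`. -/
noncomputable def csInv (c : ℝ) : Matrix (Fin 4) (Fin 4) ℝ :=
  !![2/(2-3*c^2), 3*c/(2-3*c^2), 2*c/(2-3*c^2), c/(2-3*c^2);
     3*c/(2-3*c^2), 3/(2-3*c^2), 2/(2-3*c^2), 1/(2-3*c^2);
     2*c/(2-3*c^2), 2/(2-3*c^2), 4*(1-c^2)/(2-3*c^2), 2*(1-c^2)/(2-3*c^2);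
     c/(2-3*c^2), 1/(2-3*c^2), 2*(1-c^2)/(2-3*c^2), (3-4*c^2)/(2-3*c^2)]

lemma cs_inv_eq (p : ℝ) (hd : 2 - 3*(Real.cos (Real.pi/p))^2 ≠ 0) :
    (coxeterSchlafli p)⁻¹ = csInv (Real.cos (Real.pi/p)) := by
  apply Matrix.inv_eq_right_inv
  set c := Real.cos (Real.pi/p) with hc
  ext i j
  fin_cases i <;> fin_cases j <;>
    simp [coxeterSchlafli, csInv, Matrix.mul_apply, Fin.sum_univ_four, Matrix.one_apply, ← hc] <;>
    field_simp [show 2 - c^2*3 ≠ 0 by intro h; apply hd; linarith] <;> ring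

lemma cos_sq_bounds {p : ℝ} (hp : 6 < p) :
    3/4 < (Real.cos (Real.pi/p))^2 ∧ (Real.cos (Real.pi/p))^2 < 1 ∧ 0 < Real.cos (Real.pi/p) := by
  have hπ := Real.pi_pos
  have h0 : 0 < Real.pi / p := div_pos hπ (by linarith)
  have h6 : Real.pi / p < Real.pi / 6 := by
    apply div_lt_div_of_pos_left hπ (by norm_num) hp
  have hlow : Real.cos (Real.pi/6) < Real.cos (Real.pi/p) := by
    apply Real.cos_lt_cos_of_nonneg_of_le_pi h0.le (by linarith [Real.pi_gt_three]) h6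
  rw [Real.cos_pi_div_six] at hlow
  have hs3 : (0:ℝ) < Real.sqrt 3 := Real.sqrt_pos.mpr (by norm_num)
  have hs3' : Real.sqrt 3 ^ 2 = 3 := Real.sq_sqrt (by norm_num)
  have hup : Real.cos (Real.pi/p) < 1 := by
    have := Real.cos_lt_cos_of_nonneg_of_le_pi le_rfl
      (by linarith [Real.pi_gt_three] : Real.pi / p ≤ Real.pi) h0
    simpa using this
  refine ⟨by nlinarith, by nlinarith, by nlinarith⟩

lemma ratio_alg {c : ℝ} (hd : 2-3*c^2 ≠ 0) (h1t : 1-c^2 ≠ 0) (h34 : 3-4*c^2 ≠ 0) :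
    (4*(1-c^2)/(2-3*c^2) * ((3-4*c^2)/(2-3*c^2)) - (2*(1-c^2)/(2-3*c^2))^2) /
      (4*(1-c^2)/(2-3*c^2) * ((3-4*c^2)/(2-3*c^2))) = (3*c^2-2)/(4*c^2-3) := by
  have h43 : 4*c^2 - 3 ≠ 0 := fun h => h34 (by linarith)
  have hB : 4*(1-c^2)/(2-3*c^2) * ((3-4*c^2)/(2-3*c^2)) ≠ 0 := by
    apply mul_ne_zero <;> apply div_ne_zero
    · exact fun h => h1t (by linarith)
    · exact hd
    · exact h34
    · exact hd
  rw [div_eq_div_iff hB h43]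
  field_simp
  ring

lemma sqrtArg_eq {p : ℝ} (hp : 6 < p) :
    ((coxeterSchlafli p)⁻¹ 2 2 * (coxeterSchlafli p)⁻¹ 3 3 -
        ((coxeterSchlafli p)⁻¹ 2 3) ^ 2) /
      ((coxeterSchlafli p)⁻¹ 2 2 * (coxeterSchlafli p)⁻¹ 3 3) =
    (3*(Real.cos (Real.pi/p))^2 - 2) / (4*(Real.cos (Real.pi/p))^2 - 3) := by
  obtain ⟨h1, h2, h3⟩ := cos_sq_bounds hp
  have hd : 2 - 3*(Real.cos (Real.pi/p))^2 ≠ 0 := by intro h; nlinarith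
  have h1t : 1 - (Real.cos (Real.pi/p))^2 ≠ 0 := by intro h; nlinarith
  have h34 : 3 - 4*(Real.cos (Real.pi/p))^2 ≠ 0 := by intro h; nlinarith
  rw [cs_inv_eq p hd]
  simp only [csInv, Matrix.cons_val', Matrix.cons_val_zero, Matrix.cons_val_one,
    Matrix.head_cons, Matrix.empty_val', Matrix.cons_val_fin_one, Matrix.head_fin_const,
    Matrix.cons_val_two, Matrix.cons_val_three, Matrix.tail_cons, Matrix.of_apply]
  exact ratio_alg hd h1t h34

lemma arcosh_lt_arcosh {a b : ℝ} (ha : 1 ≤ a) (hab : a < b) : arcosh a < arcosh b := by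
  unfold arcosh
  have h1 : Real.sqrt (a^2-1) ≤ Real.sqrt (b^2-1) := Real.sqrt_le_sqrt (by nlinarith)
  have h0 : (0:ℝ) < a + Real.sqrt (a^2-1) := by
    have := Real.sqrt_nonneg (a^2-1); linarith
  exact Real.log_lt_log h0 (by linarith)

/-- `h(p)` is strictly decreasing on `(6, ∞)` and tends to `0` as `p → ∞`. -/
theorem hyperballHeight_strictAnti_tendsto_zero :
    StrictAntiOn hyperballHeight (Set.Ioi 6) ∧
      Filter.Tendsto hyperballHeight Filter.atTop (nhds 0) := by
  have key : ∀ p : ℝ, 6 < p → hyperballHeight p =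
      arcosh (Real.sqrt ((3*(Real.cos (Real.pi/p))^2 - 2) /
        (4*(Real.cos (Real.pi/p))^2 - 3))) := by
    intro p hp
    unfold hyperballHeight
    rw [sqrtArg_eq hp]
  have ratio_gt_one : ∀ p : ℝ, 6 < p →
      1 < (3*(Real.cos (Real.pi/p))^2 - 2) / (4*(Real.cos (Real.pi/p))^2 - 3) := by
    intro p hp
    obtain ⟨h1, h2, h3⟩ := cos_sq_bounds hp
    rw [lt_div_iff₀ (by nlinarith)]
    nlinarith
  constructor
  · intro p hp q hq hpq
    simp only [Set.mem_Ioi] at hp hq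
    rw [key p hp, key q hq]
    have hπ := Real.pi_pos
    have hcos : Real.cos (Real.pi/p) < Real.cos (Real.pi/q) := by
      apply Real.cos_lt_cos_of_nonneg_of_le_pi
        (le_of_lt (div_pos hπ (by linarith)))
        (by
          have h6 : Real.pi / p < Real.pi / 6 := div_lt_div_of_pos_left hπ (by norm_num) hp
          linarith [Real.pi_gt_three])
        (div_lt_div_of_pos_left hπ (by linarith) hpq)
    obtain ⟨hp1, hp2, hcp⟩ := cos_sq_bounds hp
    obtain ⟨hq1, hq2, hcq⟩ := cos_sq_bounds hq
    have ht : (Real.cos (Real.pi/p))^2 < (Real.cos (Real.pi/q))^2 := by nlinarith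
    set tp := (Real.cos (Real.pi/p))^2
    set tq := (Real.cos (Real.pi/q))^2
    have hrlt : (3*tq - 2)/(4*tq - 3) < (3*tp - 2)/(4*tp - 3) := by
      rw [div_lt_div_iff₀ (by nlinarith) (by nlinarith)]
      nlinarith
    have hq1' := ratio_gt_one q hq
    apply arcosh_lt_arcosh
    · rw [show (1:ℝ) = Real.sqrt 1 by simp]
      exact Real.sqrt_le_sqrt (le_of_lt hq1')
    · exact Real.sqrt_lt_sqrt (by linarith) hrlt
  · have t1 : Filter.Tendsto (fun p : ℝ => Real.pi / p) Filter.atTop (nhds 0) :=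
      Filter.Tendsto.div_atTop tendsto_const_nhds Filter.tendsto_id
    have t2 : Filter.Tendsto (fun p : ℝ => Real.cos (Real.pi / p)) Filter.atTop (nhds 1) := by
      have := (Real.continuous_cos.tendsto 0).comp t1
      simpa [Function.comp_def] using this
    have t3 : Filter.Tendsto
        (fun p : ℝ => (3*(Real.cos (Real.pi/p))^2 - 2) / (4*(Real.cos (Real.pi/p))^2 - 3))
        Filter.atTop (nhds 1) := by
      have hnum : Filter.Tendsto (fun p : ℝ => 3*(Real.cos (Real.pi/p))^2 - 2)
          Filter.atTop (nhds 1) := by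
        have h := (((t2.pow 2).const_mul (3:ℝ)).sub_const 2)
        norm_num at h
        exact h
      have hden : Filter.Tendsto (fun p : ℝ => 4*(Real.cos (Real.pi/p))^2 - 3)
          Filter.atTop (nhds 1) := by
        have h := (((t2.pow 2).const_mul (4:ℝ)).sub_const 3)
        norm_num at h
        exact h
      have := hnum.div hden one_ne_zero
      rw [div_one] at this; exact this
    have t4 : Filter.Tendsto
        (fun p : ℝ => Real.sqrt ((3*(Real.cos (Real.pi/p))^2 - 2) /
          (4*(Real.cos (Real.pi/p))^2 - 3))) Filter.atTop (nhds 1) := by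
      have := (Real.continuous_sqrt.tendsto 1).comp t3
      simpa [Function.comp_def] using this
    have t5 : Filter.Tendsto
        (fun p : ℝ => arcosh (Real.sqrt ((3*(Real.cos (Real.pi/p))^2 - 2) /
          (4*(Real.cos (Real.pi/p))^2 - 3)))) Filter.atTop (nhds 0) := by
      unfold arcosh
      have hin : Filter.Tendsto
          (fun p : ℝ => Real.sqrt ((3*(Real.cos (Real.pi/p))^2 - 2) /
            (4*(Real.cos (Real.pi/p))^2 - 3)) +
            Real.sqrt ((Real.sqrt ((3*(Real.cos (Real.pi/p))^2 - 2) /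
              (4*(Real.cos (Real.pi/p))^2 - 3)))^2 - 1)) Filter.atTop (nhds 1) := by
        have hs : Filter.Tendsto
            (fun p : ℝ => Real.sqrt ((Real.sqrt ((3*(Real.cos (Real.pi/p))^2 - 2) /
              (4*(Real.cos (Real.pi/p))^2 - 3)))^2 - 1)) Filter.atTop (nhds 0) := by
          have h' : Filter.Tendsto
              (fun p : ℝ => (Real.sqrt ((3*(Real.cos (Real.pi/p))^2 - 2) /
                (4*(Real.cos (Real.pi/p))^2 - 3)))^2 - 1) Filter.atTop (nhds 0) := by
            have h := (t4.pow 2).sub_const 1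
            norm_num at h
            exact h
          have := (Real.continuous_sqrt.tendsto 0).comp h'
          simpa [Function.comp_def] using this
        have := t4.add hs
        norm_num at this
        exact this
      have := hin.log one_ne_zero
      simpa using this
    apply t5.congr'
    filter_upwards [Filter.eventually_gt_atTop 6] with p hp
    exact (key p hp).symm
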